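/- Let ℵ be an infinite cardinal and suppose each topological product X_i = ∏_{s∈S_i} X_{i,s}, i = 1,…,n, has property (III_ℵ). Then every separately continuous function f : X₁ × ⋯ × Xₙ → ℝ depends on at most ℵ coordinates: for each i there is T_i ⊆ S_i with |T_i| ≤ ℵ such that f(x) = f(x') whenever x_i|_{T_i} = x'_i|_{T_i} for all i. -/

import Mathlib

universe u

open Cardinal

/-- Property (I_ℵ): every locally finite family of nonempty open sets has cardinality ≤ ℵ. -/
def PropI (c : Cardinal.{u}) (X : Type u) [TopologicalSpace X] : Prop :=
  ∀ (I : Type u) (U : I → Set X), (∀ i, IsOpen (U i)) → (∀ i, (U i).Nonempty) →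
    LocallyFinite U → #I ≤ c

/-- Property (II_ℵ): every pointwise finite family of nonempty open sets has cardinality ≤ ℵ. -/
def PropII (c : Cardinal.{u}) (X : Type u) [TopologicalSpace X] : Prop :=
  ∀ (I : Type u) (U : I → Set X), (∀ i, IsOpen (U i)) → (∀ i, (U i).Nonempty) →
    (∀ x : X, {i | x ∈ U i}.Finite) → #I ≤ c

/-- Property (III_ℵ): every ℵ-pointwise family of nonempty open sets has cardinality ≤ ℵ. -/
def PropIII (c : Cardinal.{u}) (X : Type u) [TopologicalSpace X] : Prop :=
  ∀ (I : Type u) (U : I → Set X), (∀ i, IsOpen (U i)) → (∀ i, (U i).Nonempty) →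
    (∀ x : X, #{i | x ∈ U i} ≤ c) → #I ≤ c

attribute [local instance 0] Classical.propDecidable

lemma aux_base {c : Cardinal.{u}} (hc : Cardinal.aleph0 ≤ c) {σ : Type u} {Y : σ → Type u}
    [∀ s, TopologicalSpace (Y s)] (hY : PropIII c (∀ s, Y s))
    (g : (∀ s, Y s) → ℝ) (hg : Continuous g) (ε : ℝ) (hε : 0 < ε) :
    #{s : σ | ∃ z b, ε ≤ |g (Function.update z s b) - g z|} ≤ c := by
  set E := {s : σ | ∃ z b, ε ≤ |g (Function.update z s b) - g z|} with hE
  have hwit : ∀ e : E, ∃ z b, ε ≤ |g (Function.update z e.1 b) - g z| := fun e => e.2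
  choose z b hzb using hwit
  set U : E → Set (∀ s, Y s) := fun e =>
    {w | ε/2 < |g (Function.update w e.1 (b e)) - g (Function.update w e.1 (z e e.1))|} with hU
  have hopen : ∀ e, IsOpen (U e) := by
    intro e
    have h1 : Continuous fun w : ∀ s, Y s => g (Function.update w e.1 (b e)) :=
      hg.comp (continuous_id.update e.1 continuous_const)
    have h2 : Continuous fun w : ∀ s, Y s => g (Function.update w e.1 (z e e.1)) :=
      hg.comp (continuous_id.update e.1 continuous_const)
    exact isOpen_lt continuous_const ((h1.sub h2).abs)
  have hne : ∀ e, (U e).Nonempty := by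
    intro e
    refine ⟨z e, ?_⟩
    have h0 : Function.update (z e) e.1 (z e e.1) = z e := Function.update_eq_self _ _
    simp only [hU, Set.mem_setOf_eq, h0]
    exact lt_of_lt_of_le (half_lt_self hε) (hzb e)
  have hpt : ∀ w : ∀ s, Y s, #{e : E | w ∈ U e} ≤ c := by
    intro w
    have hN : IsOpen (g ⁻¹' Metric.ball (g w) (ε/4)) := (Metric.isOpen_ball).preimage hg
    have hwN : w ∈ g ⁻¹' Metric.ball (g w) (ε/4) := by
      simp only [Set.mem_preimage, Metric.mem_ball, dist_self]
      positivity
    obtain ⟨I, t, hIt, hsub⟩ := (isOpen_pi_iff.mp hN) w hwN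
    have hss : {e : E | w ∈ U e} ⊆ Subtype.val ⁻¹' (I : Set σ) := by
      intro e he
      by_contra hnot
      have hne1 : ∀ v : Y e.1, Function.update w e.1 v ∈ (I : Set σ).pi t := by
        intro v s hs
        rw [Function.update_of_ne (by rintro rfl; exact hnot hs) _ _]
        exact (hIt s hs).2
      have h1 := hsub (hne1 (b e))
      have h2 := hsub (hne1 (z e e.1))
      simp only [Set.mem_preimage, Metric.mem_ball, Real.dist_eq] at h1 h2
      have htri : |g (Function.update w e.1 (b e)) - g (Function.update w e.1 (z e e.1))|
          ≤ |g (Function.update w e.1 (b e)) - g w| +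
            |g w - g (Function.update w e.1 (z e e.1))| := abs_sub_le _ _ _
      rw [abs_sub_comm (g w)] at htri
      have hlt : |g (Function.update w e.1 (b e)) - g (Function.update w e.1 (z e e.1))| < ε/2 := by
        linarith
      exact absurd he.out (not_lt.mpr hlt.le)
    have hfin : {e : E | w ∈ U e}.Finite :=
      (I.finite_toSet.preimage (Subtype.val_injective.injOn)).subset hss
    exact hfin.lt_aleph0.le.trans hc
  exact hY E U hopen hne hpt

variable {n : ℕ} {S : Fin n → Type u} {X : ∀ i, S i → Type u}

/-- modify the (i,s) coordinate of a point of the double product -/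
noncomputable def upd (x : ∀ i, ∀ s, X i s) (i : Fin n) (s : S i) (b : X i s) :
    ∀ i, ∀ s, X i s :=
  Function.update x i (Function.update (x i) s b)

variable [∀ i s, TopologicalSpace (X i s)]

lemma aux_pinned {c : Cardinal.{u}} (hc : Cardinal.aleph0 ≤ c)
    (hX : ∀ i, PropIII c (∀ s, X i s))
    (f : (∀ i, ∀ s, X i s) → ℝ)
    (hf : ∀ (i : Fin n) (x : ∀ j, ∀ s, X j s),
      Continuous fun xi : ∀ s, X i s => f (Function.update x i xi)) :
    ∀ (m : ℕ) (A : Finset (Fin n)), A.card ≤ m → ∀ (i : Fin n), i ∉ A →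
      ∀ (p : ∀ j, ∀ s, X j s) (ε : ℝ), 0 < ε →
      #{s : S i | ∃ x b, (∀ j, j ≠ i → j ∉ A → x j = p j) ∧
        ε ≤ |f (upd x i s b) - f x|} ≤ c := by
  intro m
  induction m with
  | zero =>
    intro A hA i hiA p ε hε
    have hAe : A = ∅ := Finset.card_eq_zero.mp (Nat.le_zero.mp hA)
    subst hAe
    set g : (∀ s, X i s) → ℝ := fun z => f (Function.update p i z) with hg
    have hsub : {s : S i | ∃ x b, (∀ j, j ≠ i → j ∉ (∅ : Finset (Fin n)) → x j = p j) ∧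
        ε ≤ |f (upd x i s b) - f x|}
        ⊆ {s : S i | ∃ z b, ε ≤ |g (Function.update z s b) - g z|} := by
      rintro s ⟨x, b, hpin, hval⟩
      have hx : x = Function.update p i (x i) := by
        funext j
        by_cases hj : j = i
        · subst hj; rw [Function.update_self]
        · rw [Function.update_of_ne hj]
          exact hpin j hj (Finset.notMem_empty j)
      refine ⟨x i, b, ?_⟩
      have h1 : g (Function.update (x i) s b) = f (upd x i s b) := by
        simp only [hg, upd]
        congr 1
        conv_rhs => rw [hx]
        simp only [Function.update_self, Function.update_idem]
      have h2 : g (x i) = f x := by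
        simp only [hg]; rw [← hx]
      rw [h1, h2]
      exact hval
    exact (Cardinal.mk_le_mk_of_subset hsub).trans (aux_base hc (hX i) g (hf i p) ε hε)
  | succ m IH =>
    intro A hA i hiA p ε hε
    by_cases hAm : A.card ≤ m
    · exact IH A hAm i hiA p ε hε
    · have hAne : A.Nonempty := Finset.card_pos.mp (by omega)
      obtain ⟨j₀, hj₀⟩ := hAne
      have hij : (j₀ : Fin n) ≠ i := fun h => hiA (h ▸ hj₀)
      set E := {s : S i | ∃ x b, (∀ j, j ≠ i → j ∉ A → x j = p j) ∧
        ε ≤ |f (upd x i s b) - f x|} with hEdef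
      have hwit : ∀ e : E, ∃ x b, (∀ j, j ≠ i → j ∉ A → x j = p j) ∧
          ε ≤ |f (upd x i e.1 b) - f x| := fun e => e.2
      choose x b hpin hval using hwit
      -- commuting updates
      have hcomm : ∀ (e : E) (t : ∀ s', X j₀ s'),
          upd (Function.update (x e) j₀ t) i e.1 (b e)
            = Function.update (upd (x e) i e.1 (b e)) j₀ t := by
        intro e t
        simp only [upd]
        rw [Function.update_of_ne hij.symm t (x e)]
        exact Function.update_comm hij t _ (x e)
      set U : E → Set (∀ s', X j₀ s') := fun e =>
        {t | ε/2 < |f (Function.update (upd (x e) i e.1 (b e)) j₀ t)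
          - f (Function.update (x e) j₀ t)|} with hU
      have hopen : ∀ e, IsOpen (U e) := by
        intro e
        exact isOpen_lt continuous_const (((hf j₀ (upd (x e) i e.1 (b e))).sub (hf j₀ (x e))).abs)
      have hne : ∀ e, (U e).Nonempty := by
        intro e
        refine ⟨x e j₀, ?_⟩
        simp only [hU, Set.mem_setOf_eq]
        have e1 : Function.update (x e) j₀ (x e j₀) = x e := Function.update_eq_self _ _
        have e2 : Function.update (upd (x e) i e.1 (b e)) j₀ (x e j₀)
            = upd (x e) i e.1 (b e) := by
          have : upd (x e) i e.1 (b e) j₀ = x e j₀ := by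
            simp only [upd]
            exact Function.update_of_ne hij _ _
          rw [← this]
          exact Function.update_eq_self _ _
        rw [e1, e2]
        exact lt_of_lt_of_le (half_lt_self hε) (hval e)
      have hpt : ∀ t : ∀ s', X j₀ s', #{e : E | t ∈ U e} ≤ c := by
        intro t
        set E₂ := {s : S i | ∃ x' b', (∀ j, j ≠ i → j ∉ A.erase j₀ →
            x' j = Function.update p j₀ t j) ∧ (ε/2) ≤ |f (upd x' i s b') - f x'|} with hE₂
        have hmem : ∀ e : {e : E | t ∈ U e}, (e.1.1 : S i) ∈ E₂ := by
          rintro ⟨e, he⟩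
          have hUe : ε/2 < |f (Function.update (upd (x e) i e.1 (b e)) j₀ t)
              - f (Function.update (x e) j₀ t)| := he
          refine ⟨Function.update (x e) j₀ t, b e, ?_, ?_⟩
          · intro j hji hjA
            by_cases hjj : j = j₀
            · subst hjj
              rw [Function.update_self, Function.update_self]
            · rw [Function.update_of_ne hjj, Function.update_of_ne hjj]
              exact hpin e j hji (fun hjmem => hjA (Finset.mem_erase.mpr ⟨hjj, hjmem⟩))
          · have hb : (Function.update (x e) j₀ t) i = x e i :=
              Function.update_of_ne (Ne.symm hij) _ _
            have : upd (Function.update (x e) j₀ t) i e.1 (b e)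
                = Function.update (upd (x e) i e.1 (b e)) j₀ t := hcomm e t
            rw [this]
            exact (hUe).le
        have hinj : #{e : E | t ∈ U e} ≤ #E₂ := by
          refine Cardinal.mk_le_of_injective (f := fun e : {e : E | t ∈ U e} =>
            (⟨e.1.1, hmem e⟩ : E₂)) ?_
          intro e1 e2 h
          simp only [Subtype.mk.injEq] at h
          exact Subtype.ext (Subtype.ext h)
        refine hinj.trans ?_
        have hcard : (A.erase j₀).card ≤ m := by
          rw [Finset.card_erase_of_mem hj₀]; omega
        have hiA' : i ∉ A.erase j₀ := fun h => hiA (Finset.erase_subset _ _ h)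
        exact IH (A.erase j₀) hcard i hiA' (Function.update p j₀ t) (ε/2) (half_pos hε)
      exact hX j₀ E U hopen hne hpt

lemma aux_ess_card {c : Cardinal.{u}} (hc : Cardinal.aleph0 ≤ c)
    (hX : ∀ i, PropIII c (∀ s, X i s))
    (f : (∀ i, ∀ s, X i s) → ℝ)
    (hf : ∀ (i : Fin n) (x : ∀ j, ∀ s, X j s),
      Continuous fun xi : ∀ s, X i s => f (Function.update x i xi))
    (p : ∀ j, ∀ s, X j s) (i : Fin n) :
    #{s : S i | ∃ x b, f (upd x i s b) ≠ f x} ≤ c := by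
  set A : Finset (Fin n) := Finset.univ.erase i with hA
  have hiA : i ∉ A := by simp [hA]
  set Ek : ULift.{u} ℕ → Set (S i) := fun k =>
    {s : S i | ∃ x b, (∀ j, j ≠ i → j ∉ A → x j = p j) ∧
      (1 / (k.down + 1) : ℝ) ≤ |f (upd x i s b) - f x|} with hEk
  have hsub : {s : S i | ∃ x b, f (upd x i s b) ≠ f x} ⊆ ⋃ k, Ek k := by
    rintro s ⟨x, b, hxb⟩
    have hpos : 0 < |f (upd x i s b) - f x| := abs_pos.mpr (sub_ne_zero.mpr hxb)
    obtain ⟨k, hk⟩ := exists_nat_one_div_lt hpos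
    refine Set.mem_iUnion.mpr ⟨ULift.up k, x, b, ?_, hk.le⟩
    intro j hji hjA
    exact absurd (Finset.mem_erase.mpr ⟨hji, Finset.mem_univ j⟩) hjA
  refine (Cardinal.mk_le_mk_of_subset hsub).trans ?_
  refine (Cardinal.mk_iUnion_le Ek).trans ?_
  have h1 : #(ULift.{u} ℕ) = Cardinal.aleph0 := by simp
  have h2 : ⨆ k, #(Ek k) ≤ c := by
    refine ciSup_le' fun k => ?_
    have : (0 : ℝ) < 1 / (k.down + 1) := by positivity
    exact aux_pinned hc hX f hf n A (Finset.card_le_univ A |>.trans (by simp)) i hiA p _ this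
  calc #(ULift.{u} ℕ) * ⨆ k, #(Ek k) ≤ Cardinal.aleph0 * c := by
        rw [h1]; exact mul_le_mul_right h2 _
    _ = c := by rw [Cardinal.mul_eq_max le_rfl hc]; exact max_eq_right hc

lemma aux_recon {σ : Type u} {Y : σ → Type u} [∀ s, TopologicalSpace (Y s)]
    (g : (∀ s, Y s) → ℝ) (hg : Continuous g) (u v : ∀ s, Y s)
    (h : ∀ s, u s ≠ v s → ∀ z b, g (Function.update z s b) = g z) : g u = g v := by
  by_contra hne
  set ε := |g u - g v| with hε
  have hεpos : 0 < ε := abs_pos.mpr (sub_ne_zero.mpr hne)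
  have hN : IsOpen (g ⁻¹' Metric.ball (g v) ε) := (Metric.isOpen_ball).preimage hg
  have hvN : v ∈ g ⁻¹' Metric.ball (g v) ε := by
    simp only [Set.mem_preimage, Metric.mem_ball, dist_self]; exact hεpos
  obtain ⟨I, t, hIt, hsub⟩ := (isOpen_pi_iff.mp hN) v hvN
  set F := I.filter (fun s => u s ≠ v s) with hF
  set w : ∀ s, Y s := fun s => if s ∈ F then v s else u s with hw
  have hwmem : w ∈ (I : Set σ).pi t := by
    intro s hs
    by_cases hd : u s = v s
    · have : w s = v s := by
        simp only [hw]; split <;> simp [hd]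
      rw [this]; exact (hIt s hs).2
    · have hsF : s ∈ F := Finset.mem_filter.mpr ⟨hs, hd⟩
      have : w s = v s := by simp only [hw, if_pos hsF]
      rw [this]; exact (hIt s hs).2
  have hwu : g w = g u := by
    have key : ∀ G : Finset σ, (∀ s ∈ G, u s ≠ v s) →
        g (fun s => if s ∈ G then v s else u s) = g u := by
      intro G
      induction G using Finset.induction_on with
      | empty => intro _; simp
      | @insert a G ha IH =>
        intro hG
        have heq : (fun s => if s ∈ insert a G then v s else u s)
            = Function.update (fun s => if s ∈ G then v s else u s) a (v a) := by
          funext s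
          by_cases hsa : s = a
          · subst hsa; rw [Function.update_self, if_pos (Finset.mem_insert_self s G)]
          · rw [Function.update_of_ne hsa]
            simp [Finset.mem_insert, hsa]
        rw [heq, h a (hG a (Finset.mem_insert_self a G)) _ (v a)]
        exact IH (fun s hs => hG s (Finset.mem_insert_of_mem hs))
    exact key F (fun s hs => (Finset.mem_filter.mp hs).2)
  have := hsub hwmem
  simp only [Set.mem_preimage, Metric.mem_ball, Real.dist_eq] at this
  rw [hwu] at this
  exact absurd this (lt_irrefl ε)


theorem stmt8 (c : Cardinal.{u}) (hc : Cardinal.aleph0 ≤ c)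
    (n : ℕ) (S : Fin n → Type u) (X : ∀ i, S i → Type u)
    [∀ i s, TopologicalSpace (X i s)]
    (hX : ∀ i, PropIII c (∀ s, X i s))
    (f : (∀ i, ∀ s, X i s) → ℝ)
    (hf : ∀ (i : Fin n) (x : ∀ j, ∀ s, X j s),
      Continuous fun xi : ∀ s, X i s => f (Function.update x i xi)) :
    ∃ T : ∀ i, Set (S i), (∀ i, #(T i) ≤ c) ∧
      ∀ u v : ∀ i, ∀ s, X i s,
        (∀ i, ∀ s ∈ T i, u i s = v i s) → f u = f v := by
  by_cases hdom : Nonempty (∀ j, ∀ s, X j s)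
  · obtain ⟨p⟩ := hdom
    refine ⟨fun i => {s : S i | ∃ x b, f (upd x i s b) ≠ f x},
      fun i => aux_ess_card hc hX f hf p i, ?_⟩
    intro u v huv
    -- one-step: update factor k from u k to v k
    have one_step : ∀ (z : ∀ j, ∀ s, X j s) (k : Fin n), z k = u k →
        f (Function.update z k (v k)) = f z := by
      intro z k hzk
      have hcont : Continuous fun xi : ∀ s, X k s => f (Function.update z k xi) := hf k z
      have hkey : (fun xi : ∀ s, X k s => f (Function.update z k xi)) (u k)
          = (fun xi : ∀ s, X k s => f (Function.update z k xi)) (v k) := by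
        refine aux_recon _ hcont (u k) (v k) ?_
        intro s hs ζ b
        have hsT : ¬ (∃ x b', f (upd x k s b') ≠ f x) := by
          intro hmem
          exact hs (huv k s hmem)
        push_neg at hsT
        have h1 : Function.update z k (Function.update ζ s b)
            = upd (Function.update z k ζ) k s b := by
          simp only [upd, Function.update_self, Function.update_idem]
        simp only [h1]
        rw [hsT (Function.update z k ζ) b]
      have hu : Function.update z k (u k) = z := by rw [← hzk]; exact Function.update_eq_self _ _
      calc f (Function.update z k (v k)) = f (Function.update z k (u k)) := hkey.symm
        _ = f z := by rw [hu]
    -- sequence of hybrids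
    set Z : ℕ → ∀ j, ∀ s, X j s := fun m => fun j => if (j : ℕ) < m then v j else u j with hZ
    have hstep : ∀ m : ℕ, m ≤ n → f (Z m) = f u := by
      intro m
      induction m with
      | zero =>
        intro _
        have : Z 0 = u := by funext j; simp [hZ]
        rw [this]
      | succ m IH =>
        intro hm
        have hmn : m < n := hm
        set k : Fin n := ⟨m, hmn⟩ with hk
        have hZk : Z m k = u k := by simp [hZ, hk]
        have hZsucc : Z (m + 1) = Function.update (Z m) k (v k) := by
          funext j
          by_cases hj : j = k
          · subst hj
            rw [Function.update_self]
            simp [hZ, hk]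
          · rw [Function.update_of_ne hj]
            have hjm : (j : ℕ) ≠ m := fun hh => hj (Fin.ext hh)
            have : ((j : ℕ) < m + 1) ↔ ((j : ℕ) < m) := by omega
            simp only [hZ, this]
        rw [hZsucc, one_step (Z m) k hZk]
        exact IH (Nat.le_of_succ_le hm)
    have hZn : Z n = v := by
      funext j
      simp [hZ, j.isLt]
    have := hstep n le_rfl
    rw [hZn] at this
    exact this.symm
  · refine ⟨fun i => ∅, fun i => ?_, fun u v _ => absurd ⟨u⟩ hdom⟩
    simp only [Cardinal.mk_emptyCollection]
    exact zero_le
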